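/- If f, g ∈ E_{(β,μ)} with β > 0 and μ > 1, then the convolution f ∗ g(m) = ∫_{−∞}^{∞} f(m−m₁) g(m₁) dm₁ is well-defined for every m ∈ ℝ and belongs to E_{(β,μ)}. -/

import Mathlib

open MeasureTheory Real

noncomputable def Enorm (β μ : ℝ) (h : ℝ → ℂ) : ℝ :=
  ⨆ m : ℝ, (1 + |m|) ^ μ * Real.exp (β * |m|) * ‖h m‖

def memE (β μ : ℝ) (h : ℝ → ℂ) : Prop :=
  Continuous h ∧ BddAbove (Set.range fun m : ℝ =>
    (1 + |m|) ^ μ * Real.exp (β * |m|) * ‖h m‖)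

lemma aux_one_add_abs_pos (x : ℝ) : (0:ℝ) < 1 + |x| := by positivity

lemma aux_rpow_one_le (μ x : ℝ) (hμ0 : 0 ≤ μ) : (1:ℝ) ≤ (1 + |x|) ^ μ :=
  Real.one_le_rpow (by linarith [abs_nonneg x]) hμ0

/-- Decay bound extracted from a weighted sup bound. -/
lemma aux_decay {β μ C : ℝ} {f : ℝ → ℂ}
    (hC : ∀ x, (1 + |x|) ^ μ * Real.exp (β * |x|) * ‖f x‖ ≤ C)
    (x : ℝ) :
    ‖f x‖ ≤ C * (1 + |x|) ^ (-μ) * Real.exp (-(β * |x|)) := by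
  have hA : (0:ℝ) < (1 + |x|) ^ μ := Real.rpow_pos_of_pos (aux_one_add_abs_pos x) μ
  have hE : (0:ℝ) < Real.exp (β * |x|) := Real.exp_pos _
  rw [Real.rpow_neg (aux_one_add_abs_pos x).le, Real.exp_neg, mul_assoc, ← mul_inv,
    ← div_eq_mul_inv, le_div_iff₀ (by positivity)]
  calc ‖f x‖ * ((1 + |x|) ^ μ * Real.exp (β * |x|))
      = (1 + |x|) ^ μ * Real.exp (β * |x|) * ‖f x‖ := by ring
    _ ≤ C := hC x

/-- Key pointwise estimate for the convolution integrand. -/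
lemma aux_key {β μ Cf Cg : ℝ} (hβ : 0 < β) (hμ0 : 0 ≤ μ) {f g : ℝ → ℂ}
    (hCf : ∀ x, (1 + |x|) ^ μ * Real.exp (β * |x|) * ‖f x‖ ≤ Cf)
    (hCg : ∀ x, (1 + |x|) ^ μ * Real.exp (β * |x|) * ‖g x‖ ≤ Cg)
    (m t : ℝ) :
    (1 + |m|) ^ μ * Real.exp (β * |m|) * ‖f (m - t) * g t‖
      ≤ 2 ^ μ * Cf * Cg * ((1 + |m - t|) ^ (-μ) + (1 + |t|) ^ (-μ)) := by
  have hCf0 : 0 ≤ Cf := le_trans (by positivity) (hCf 0)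
  have hCg0 : 0 ≤ Cg := le_trans (by positivity) (hCg 0)
  have hA0 : (0:ℝ) < 1 + |m - t| := aux_one_add_abs_pos _
  have hB0 : (0:ℝ) < 1 + |t| := aux_one_add_abs_pos _
  have hm' : |m| ≤ |m - t| + |t| := by
    simpa using abs_add_le (m - t) t
  -- exponential part
  have hexp : Real.exp (β * |m|) ≤ Real.exp (β * |m - t|) * Real.exp (β * |t|) := by
    rw [← Real.exp_add]
    apply Real.exp_le_exp.mpr
    nlinarith [hβ.le]
  -- polynomial part
  have hpoly : (1 + |m|) ^ μ
      ≤ 2 ^ μ * (((1 + |m - t|) ^ (-μ) + (1 + |t|) ^ (-μ)) *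
          ((1 + |m - t|) ^ μ * (1 + |t|) ^ μ)) := by
    have hAinv : (0:ℝ) < (1 + |m - t|) ^ (-μ) := Real.rpow_pos_of_pos hA0 _
    have hBinv : (0:ℝ) < (1 + |t|) ^ (-μ) := Real.rpow_pos_of_pos hB0 _
    have hApos : (0:ℝ) < (1 + |m - t|) ^ μ := Real.rpow_pos_of_pos hA0 _
    have hBpos : (0:ℝ) < (1 + |t|) ^ μ := Real.rpow_pos_of_pos hB0 _
    have hAA : (1 + |m - t|) ^ (-μ) * (1 + |m - t|) ^ μ = 1 := by
      rw [← Real.rpow_add hA0]; simp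
    have hBB : (1 + |t|) ^ (-μ) * (1 + |t|) ^ μ = 1 := by
      rw [← Real.rpow_add hB0]; simp
    rcases le_total (1 + |m - t|) (1 + |t|) with h | h
    · have h1 : (1 + |m|) ^ μ ≤ (2 * (1 + |t|)) ^ μ := by
        apply Real.rpow_le_rpow (by positivity) (by linarith) hμ0
      have h2 : (2 * (1 + |t|)) ^ μ = 2 ^ μ * (1 + |t|) ^ μ :=
        Real.mul_rpow (by norm_num) hB0.le
      calc (1 + |m|) ^ μ ≤ 2 ^ μ * (1 + |t|) ^ μ := by rw [← h2]; exact h1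
        _ = 2 ^ μ * (((1 + |m - t|) ^ (-μ)) * ((1 + |m - t|) ^ μ * (1 + |t|) ^ μ)) := by
            rw [← mul_assoc ((1 + |m - t|) ^ (-μ)) ((1 + |m - t|) ^ μ) ((1 + |t|) ^ μ), hAA, one_mul]
        _ ≤ 2 ^ μ * (((1 + |m - t|) ^ (-μ) + (1 + |t|) ^ (-μ)) *
              ((1 + |m - t|) ^ μ * (1 + |t|) ^ μ)) := by
            gcongr
            linarith
    · have h1 : (1 + |m|) ^ μ ≤ (2 * (1 + |m - t|)) ^ μ := by
        apply Real.rpow_le_rpow (by positivity) (by linarith) hμ0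
      have h2 : (2 * (1 + |m - t|)) ^ μ = 2 ^ μ * (1 + |m - t|) ^ μ :=
        Real.mul_rpow (by norm_num) hA0.le
      calc (1 + |m|) ^ μ ≤ 2 ^ μ * (1 + |m - t|) ^ μ := by rw [← h2]; exact h1
        _ = 2 ^ μ * (((1 + |t|) ^ (-μ)) * ((1 + |m - t|) ^ μ * (1 + |t|) ^ μ)) := by
            rw [show (1 + |t|) ^ (-μ) * ((1 + |m - t|) ^ μ * (1 + |t|) ^ μ)
                = ((1 + |t|) ^ (-μ) * (1 + |t|) ^ μ) * (1 + |m - t|) ^ μ from by ring, hBB,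
              one_mul]
        _ ≤ 2 ^ μ * (((1 + |m - t|) ^ (-μ) + (1 + |t|) ^ (-μ)) *
              ((1 + |m - t|) ^ μ * (1 + |t|) ^ μ)) := by
            gcongr
            linarith
  have habsf : (0:ℝ) ≤ ‖f (m - t)‖ := norm_nonneg _
  have habsg : (0:ℝ) ≤ ‖g t‖ := norm_nonneg _
  have hS : (0:ℝ) ≤ (1 + |m - t|) ^ (-μ) + (1 + |t|) ^ (-μ) := by positivity
  calc (1 + |m|) ^ μ * Real.exp (β * |m|) * ‖f (m - t) * g t‖
      = ((1 + |m|) ^ μ) * (Real.exp (β * |m|)) *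
          (‖f (m - t)‖ * ‖g t‖) := by rw [norm_mul]
    _ ≤ (2 ^ μ * (((1 + |m - t|) ^ (-μ) + (1 + |t|) ^ (-μ)) *
          ((1 + |m - t|) ^ μ * (1 + |t|) ^ μ))) *
          (Real.exp (β * |m - t|) * Real.exp (β * |t|)) *
          (‖f (m - t)‖ * ‖g t‖) := by
        gcongr
    _ = 2 ^ μ * ((1 + |m - t|) ^ (-μ) + (1 + |t|) ^ (-μ)) *
          (((1 + |m - t|) ^ μ * Real.exp (β * |m - t|) * ‖f (m - t)‖) *
           ((1 + |t|) ^ μ * Real.exp (β * |t|) * ‖g t‖)) := by ring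
    _ ≤ 2 ^ μ * ((1 + |m - t|) ^ (-μ) + (1 + |t|) ^ (-μ)) * (Cf * Cg) := by
        have h1 : (0:ℝ) ≤ (1 + |m - t|) ^ μ * Real.exp (β * |m - t|) *
            ‖f (m - t)‖ := by positivity
        have h2 : (0:ℝ) ≤ (1 + |t|) ^ μ * Real.exp (β * |t|) * ‖g t‖ := by
          positivity
        have hmm : ((1 + |m - t|) ^ μ * Real.exp (β * |m - t|) * ‖f (m - t)‖) *
            ((1 + |t|) ^ μ * Real.exp (β * |t|) * ‖g t‖) ≤ Cf * Cg :=
          mul_le_mul (hCf _) (hCg _) h2 hCf0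
        have hpos : (0:ℝ) ≤ 2 ^ μ * ((1 + |m - t|) ^ (-μ) + (1 + |t|) ^ (-μ)) := by
          positivity
        exact mul_le_mul_of_nonneg_left hmm hpos
    _ = 2 ^ μ * Cf * Cg * ((1 + |m - t|) ^ (-μ) + (1 + |t|) ^ (-μ)) := by ring

/-- If `f, g ∈ E_{(β,μ)}` with `β > 0`, `μ > 1`, the convolution
`f ∗ g (m) = ∫ f(m−m₁) g(m₁) dm₁` is well defined for every `m`
and belongs to `E_{(β,μ)}`. -/
theorem convolution_mem_E (β μ : ℝ) (hβ : 0 < β) (hμ : 1 < μ)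
    (f g : ℝ → ℂ) (hf : memE β μ f) (hg : memE β μ g) :
    (∀ m : ℝ, Integrable (fun m₁ : ℝ => f (m - m₁) * g m₁)) ∧
      memE β μ (fun m => ∫ m₁ : ℝ, f (m - m₁) * g m₁) := by
  obtain ⟨hfc, Cf, hCfm⟩ := hf
  obtain ⟨hgc, Cg, hCgm⟩ := hg
  have hμ0 : (0:ℝ) ≤ μ := by linarith
  have hCf : ∀ x, (1 + |x|) ^ μ * Real.exp (β * |x|) * ‖f x‖ ≤ Cf :=
    fun x => hCfm (Set.mem_range_self x)
  have hCg : ∀ x, (1 + |x|) ^ μ * Real.exp (β * |x|) * ‖g x‖ ≤ Cg :=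
    fun x => hCgm (Set.mem_range_self x)
  have hCf0 : 0 ≤ Cf := le_trans (by positivity) (hCf 0)
  have hCg0 : 0 ≤ Cg := le_trans (by positivity) (hCg 0)
  -- simple bounds
  have hone : ∀ x : ℝ, (1:ℝ) ≤ (1 + |x|) ^ μ * Real.exp (β * |x|) := by
    intro x
    have h1 := aux_rpow_one_le μ x hμ0
    have h2 : (1:ℝ) ≤ Real.exp (β * |x|) := Real.one_le_exp (by positivity)
    nlinarith
  have hfbd : ∀ x, ‖f x‖ ≤ Cf := by
    intro x
    calc ‖f x‖ ≤ (1 + |x|) ^ μ * Real.exp (β * |x|) * ‖f x‖ :=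
          le_mul_of_one_le_left (norm_nonneg _) (hone x)
      _ ≤ Cf := hCf x
  have hgbd : ∀ x, ‖g x‖ ≤ Cg * (1 + |x|) ^ (-μ) := by
    intro x
    have h := aux_decay hCg x
    calc ‖g x‖ ≤ Cg * (1 + |x|) ^ (-μ) * Real.exp (-(β * |x|)) := h
      _ ≤ Cg * (1 + |x|) ^ (-μ) * 1 :=
          mul_le_mul_of_nonneg_left
            (Real.exp_le_one_iff.mpr (neg_nonpos.mpr (by positivity))) (by positivity)
      _ = Cg * (1 + |x|) ^ (-μ) := mul_one _
  -- integrability of the bracket weight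
  have hKint : Integrable (fun t : ℝ => (1 + |t|) ^ (-μ)) := by
    have := integrable_one_add_norm (E := ℝ) (μ := volume) (r := μ) (by simpa using hμ)
    simpa [Real.norm_eq_abs] using this
  -- part 1 : integrability
  have hint : ∀ m : ℝ, Integrable (fun m₁ : ℝ => f (m - m₁) * g m₁) := by
    intro m
    have hmeas : AEStronglyMeasurable (fun m₁ : ℝ => f (m - m₁) * g m₁) volume :=
      ((hfc.comp (continuous_const.sub continuous_id)).mul hgc).aestronglyMeasurable
    refine ((hKint.const_mul (Cf * Cg)).mono' hmeas ?_)
    filter_upwards with t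
    rw [norm_mul]
    calc ‖f (m - t)‖ * ‖g t‖
        ≤ Cf * (Cg * (1 + |t|) ^ (-μ)) :=
          mul_le_mul (hfbd _) (hgbd _) (norm_nonneg _) hCf0
      _ = Cf * Cg * (1 + |t|) ^ (-μ) := by ring
  refine ⟨hint, ?_, ?_⟩
  -- continuity via mathlib convolution
  · have hgint : Integrable g := by
      refine (hKint.const_mul Cg).mono' hgc.aestronglyMeasurable ?_
      filter_upwards with t
      exact hgbd t
    have hfbdd : BddAbove (Set.range fun x : ℝ => ‖f x‖) := by
      refine ⟨Cf, ?_⟩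
      rintro y ⟨x, rfl⟩
      simpa using hfbd x
    have hcont : Continuous (convolution g f (ContinuousLinearMap.mul ℂ ℂ) volume) :=
      hfbdd.continuous_convolution_right_of_integrable _ hgint hfc
    have heq : (fun m => ∫ m₁ : ℝ, f (m - m₁) * g m₁)
        = convolution g f (ContinuousLinearMap.mul ℂ ℂ) volume := by
      funext m
      simp only [convolution_def, ContinuousLinearMap.mul_apply']
      rw [show (fun t => f (m - t) * g t) = (fun t => g t * f (m - t)) from
        funext fun t => mul_comm _ _]
    rw [heq]
    exact hcont
  -- weighted boundedness
  · set K : ℝ := ∫ t : ℝ, (1 + |t|) ^ (-μ) with hK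
    refine ⟨2 ^ μ * Cf * Cg * (K + K), ?_⟩
    rintro y ⟨m, rfl⟩
    have hw0 : (0:ℝ) ≤ (1 + |m|) ^ μ * Real.exp (β * |m|) := by positivity
    have hintm := hint m
    have hbound_int : Integrable (fun t : ℝ =>
        2 ^ μ * Cf * Cg * ((1 + |m - t|) ^ (-μ) + (1 + |t|) ^ (-μ))) :=
      ((hKint.comp_sub_left m).add hKint).const_mul _
    calc (1 + |m|) ^ μ * Real.exp (β * |m|) *
          ‖(fun m => ∫ m₁ : ℝ, f (m - m₁) * g m₁) m‖
        = (1 + |m|) ^ μ * Real.exp (β * |m|) * ‖∫ m₁ : ℝ, f (m - m₁) * g m₁‖ := by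
          rfl
      _ ≤ (1 + |m|) ^ μ * Real.exp (β * |m|) * ∫ m₁ : ℝ, ‖f (m - m₁) * g m₁‖ :=
          mul_le_mul_of_nonneg_left (norm_integral_le_integral_norm _) hw0
      _ = ∫ m₁ : ℝ, (1 + |m|) ^ μ * Real.exp (β * |m|) * ‖f (m - m₁) * g m₁‖ := by
          rw [integral_const_mul]
      _ ≤ ∫ m₁ : ℝ, 2 ^ μ * Cf * Cg * ((1 + |m - m₁|) ^ (-μ) + (1 + |m₁|) ^ (-μ)) := by
          refine integral_mono (hintm.norm.const_mul _) hbound_int ?_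
          intro t
          simpa using aux_key hβ hμ0 hCf hCg m t
      _ = 2 ^ μ * Cf * Cg * (K + K) := by
          rw [integral_const_mul, integral_add (hKint.comp_sub_left m) hKint,
            integral_sub_left_eq_self (fun t : ℝ => (1 + |t|) ^ (-μ)) volume m]
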